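/- Let A be an m×n real matrix, H an n×n real matrix, v ∈ ℝ^m and w ∈ ℝ^n with δ = w ⬝ᵥ (H *ᵥ (Aᵀ *ᵥ v)) ≠ 0, and let H' = H - (1/δ) • vecMulVec (H *ᵥ (Aᵀ *ᵥ v)) (Hᵀ *ᵥ w). Then the range of the linear map x ↦ H'ᵀ *ᵥ x equals the intersection of the range of x ↦ Hᵀ *ᵥ x with the subspace {y ∈ ℝ^n : v ⬝ᵥ (A *ᵥ y) = 0}. -/

import Mathlib

open Matrix

lemma vecMulVec_mulVec' {n : ℕ} (a b x : Fin n → ℝ) :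
    vecMulVec a b *ᵥ x = (b ⬝ᵥ x) • a := by
  funext i
  simp [vecMulVec, mulVec, dotProduct, Finset.mul_sum, mul_comm, mul_left_comm]

lemma vecMulVec_transpose' {n : ℕ} (a b : Fin n → ℝ) :
    (vecMulVec a b)ᵀ = vecMulVec b a := by
  ext i j; simp [vecMulVec, mul_comm]

theorem abs_update_range_transpose {m n : ℕ}
    (A : Matrix (Fin m) (Fin n) ℝ) (H : Matrix (Fin n) (Fin n) ℝ)
    (v : Fin m → ℝ) (w : Fin n → ℝ)
    (hδ : w ⬝ᵥ (H *ᵥ (Aᵀ *ᵥ v)) ≠ 0)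
    (H' : Matrix (Fin n) (Fin n) ℝ)
    (hH' : H' = H - (1 / (w ⬝ᵥ (H *ᵥ (Aᵀ *ᵥ v)))) •
      vecMulVec (H *ᵥ (Aᵀ *ᵥ v)) (Hᵀ *ᵥ w)) :
    Set.range (fun x : Fin n → ℝ => H'ᵀ *ᵥ x) =
      Set.range (fun x : Fin n → ℝ => Hᵀ *ᵥ x) ∩
        {y : Fin n → ℝ | v ⬝ᵥ (A *ᵥ y) = 0} := by
  set u : Fin n → ℝ := Aᵀ *ᵥ v with hu
  set δ : ℝ := w ⬝ᵥ (H *ᵥ u) with hδdef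
  -- key dot product identities
  have hvAy : ∀ y : Fin n → ℝ, v ⬝ᵥ (A *ᵥ y) = u ⬝ᵥ y := by
    intro y
    rw [dotProduct_mulVec, hu, mulVec_transpose]
  have huHt : ∀ x : Fin n → ℝ, u ⬝ᵥ (Hᵀ *ᵥ x) = (H *ᵥ u) ⬝ᵥ x := by
    intro x
    rw [dotProduct_mulVec, vecMul_transpose]
  have hHt' : ∀ x : Fin n → ℝ,
      H'ᵀ *ᵥ x = Hᵀ *ᵥ x - (δ⁻¹ * ((H *ᵥ u) ⬝ᵥ x)) • (Hᵀ *ᵥ w) := by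
    intro x
    rw [hH']
    simp only [transpose_sub, transpose_smul, vecMulVec_transpose', sub_mulVec,
      smul_mulVec, vecMulVec_mulVec']
    rw [one_div, smul_smul]
  have huq : u ⬝ᵥ (Hᵀ *ᵥ w) = δ := by
    rw [huHt, hδdef, dotProduct_comm]
  ext y
  constructor
  · rintro ⟨x, rfl⟩
    constructor
    · refine ⟨x - (δ⁻¹ * ((H *ᵥ u) ⬝ᵥ x)) • w, ?_⟩
      show Hᵀ *ᵥ _ = H'ᵀ *ᵥ x
      rw [hHt' x, mulVec_sub, mulVec_smul]
    · simp only [Set.mem_setOf_eq]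
      rw [hvAy, hHt', dotProduct_sub, dotProduct_smul, huq, huHt, smul_eq_mul]
      field_simp
      ring
  · rintro ⟨⟨x, rfl⟩, hy⟩
    refine ⟨x, ?_⟩
    simp only [Set.mem_setOf_eq] at hy
    rw [hvAy, huHt] at hy
    show H'ᵀ *ᵥ x = Hᵀ *ᵥ x
    rw [hHt', hy, mul_zero, zero_smul, sub_zero]
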